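/- Let 𝔖 be a translative G-semimatroid of rank d. Then the h-polynomial of the finite simplicial poset I_𝔖 of orbits of independent sets satisfies h_{I_𝔖}(t) = t^d · T_𝔖(1/t, 1), where T_𝔖 is the Tutte polynomial of the action. -/
import Mathlib


attribute [local instance] Classical.propDecidable

/-- A (finite-rank) semimatroid on a ground set `S`: a simplicial complex `K` of
"central" finite subsets of `S` together with a rank function `ρ` satisfying the
semimatroid axioms of Ardila and Kawahara. -/
structure Semimatroid (S : Type*) [DecidableEq S] where
  K : Set (Finset S)
  ρ : Finset S → ℕ
  empty_mem : ∅ ∈ K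
  down : ∀ ⦃X Y : Finset S⦄, X ∈ K → Y ⊆ X → Y ∈ K
  rank_le_card : ∀ X ∈ K, ρ X ≤ X.card
  mono : ∀ ⦃X Y : Finset S⦄, Y ∈ K → X ⊆ Y → ρ X ≤ ρ Y
  submodular : ∀ ⦃X Y : Finset S⦄, X ∈ K → Y ∈ K → X ∪ Y ∈ K →
    ρ (X ∪ Y) + ρ (X ∩ Y) ≤ ρ X + ρ Y
  cr1 : ∀ ⦃X Y : Finset S⦄, X ∈ K → Y ∈ K → ρ X = ρ (X ∩ Y) → X ∪ Y ∈ K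
  cr2 : ∀ ⦃X Y : Finset S⦄, X ∈ K → Y ∈ K → ρ X < ρ Y →
    ∃ y ∈ Y, y ∉ X ∧ insert y X ∈ K

/-- The `G`-orbit of a central set `X`, as a set of finite subsets of `S`. -/
def orbSet (G : Type*) {S : Type*} [DecidableEq S] [Group G] [MulAction G S]
    (X : Finset S) : Set (Finset S) :=
  {Y | ∃ g : G, Y = X.image (fun s => g • s)}

/-- The number of `G`-orbits of central sets of a semimatroid satisfying a given
predicate (invariant on orbits). -/
noncomputable def numOrbits (G : Type*) {S : Type*} [DecidableEq S] [Group G]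
    [MulAction G S] (M : Semimatroid S) (pred : Finset S → Prop) : ℕ :=
  Set.ncard {O : Set (Finset S) | ∃ X : Finset S, X ∈ M.K ∧ pred X ∧ O = orbSet G X}


lemma mem_orbSet_self {G S : Type*} [DecidableEq S] [Group G] [MulAction G S]
    (X : Finset S) : X ∈ orbSet G X :=
  ⟨1, by ext a; simp⟩

/-- A choice of representative central set for an orbit. -/
noncomputable def repC (G : Type*) {S : Type*} [DecidableEq S] [Group G] [MulAction G S]
    (M : Semimatroid S) (O : Set (Finset S)) : Finset S :=
  if h : ∃ X, X ∈ M.K ∧ O = orbSet G X then h.choose else ∅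

lemma repC_spec {G S : Type*} [DecidableEq S] [Group G] [MulAction G S]
    {M : Semimatroid S} {O : Set (Finset S)} (h : ∃ X, X ∈ M.K ∧ O = orbSet G X) :
    repC G M O ∈ M.K ∧ O = orbSet G (repC G M O) := by
  rw [repC, dif_pos h]; exact h.choose_spec

/-- Let `𝔖 : G ↻ S` be a translative `G`-semimatroid of rank `d`.
Then the `h`-polynomial of the finite simplicial poset `I_𝔖` of orbits of independent
sets satisfies `h_{I_𝔖}(t) = t^d · T_𝔖(1/t, 1)`, where
`T_𝔖(x,y) = Σ_{A ⊆ E_𝔖} m_𝔖(A) (x−1)^{d−ρ̲(A)} (y−1)^{|A|−ρ̲(A)}` is the Tutte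
polynomial of the action (`E_𝔖 = S/G`, `m_𝔖(A)` the number of orbits of central sets
with support `A`, and `ρ̲(A)` their common rank). -/
theorem h_polynomial_eq_Tutte_evaluation
    {S G : Type*} [DecidableEq S] [Group G] [MulAction G S]
    [Fintype (Quotient (MulAction.orbitRel G S))]
    (M : Semimatroid S)
    (hK : ∀ (g : G), ∀ X ∈ M.K, X.image (fun s => g • s) ∈ M.K)
    (hρinv : ∀ (g : G), ∀ X ∈ M.K, M.ρ (X.image (fun s => g • s)) = M.ρ X)
    (hfin : Set.Finite {O : Set (Finset S) | ∃ X ∈ M.K, O = orbSet G X})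
    (htrans : ∀ (s : S) (g : G), ({s, g • s} : Finset S) ∈ M.K → g • s = s)
    (d : ℕ) (hd : ∀ X ∈ M.K, M.ρ X ≤ d) (hd' : ∃ X ∈ M.K, M.ρ X = d)
    (ρ' : Finset (Quotient (MulAction.orbitRel G S)) → ℕ)
    (hρ' : ∀ X ∈ M.K, ρ' (X.image (Quotient.mk (MulAction.orbitRel G S))) = M.ρ X)
    (t : ℚ) (ht : t ≠ 0) :
    t ^ d * ∑ i ∈ Finset.range (d + 1),
        (numOrbits G M (fun X => M.ρ X = X.card ∧ X.card = i) : ℚ) *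
          ((1 - t) / t) ^ (d - i) =
    t ^ d * ∑ A : Finset (Quotient (MulAction.orbitRel G S)),
        (numOrbits G M
            (fun X => X.image (Quotient.mk (MulAction.orbitRel G S)) = A) : ℚ) *
          (1 / t - 1) ^ (d - ρ' A) * ((1 : ℚ) - 1) ^ (A.card - ρ' A) := by
  classical
  have h1t : (1 / t - 1 : ℚ) = (1 - t) / t := by field_simp
  have hmk : ∀ (g : G) (s : S),
      Quotient.mk (MulAction.orbitRel G S) (g • s) = Quotient.mk (MulAction.orbitRel G S) s :=
    fun g s => Quotient.sound (MulAction.mem_orbit s g)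
  have himg : ∀ (g : G) (X : Finset S),
      (X.image (fun s => g • s)).image (Quotient.mk (MulAction.orbitRel G S))
        = X.image (Quotient.mk (MulAction.orbitRel G S)) := by
    intro g X
    rw [Finset.image_image]
    exact Finset.image_congr fun s _ => hmk g s
  have hcard : ∀ (g : G) (X : Finset S), (X.image (fun s => g • s)).card = X.card :=
    fun g X => Finset.card_image_of_injective X (MulAction.injective g)
  have hsupp : ∀ X ∈ M.K, (X.image (Quotient.mk (MulAction.orbitRel G S))).card = X.card := by
    intro X hX
    apply Finset.card_image_of_injOn
    intro s hs s' hs' h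
    obtain ⟨g, hg⟩ := MulAction.mem_orbit_iff.mp (Quotient.exact h)
    have hsub : ({s', g • s'} : Finset S) ⊆ X := by
      intro a ha
      rcases Finset.mem_insert.1 ha with h1 | h1
      · subst h1; exact hs'
      · rw [Finset.mem_singleton.1 h1, hg]; exact hs
    have hts := htrans s' g (M.down hX hsub)
    rw [← hg, hts]
  have hrepP : ∀ (O : Set (Finset S)) (X : Finset S), X ∈ M.K → O = orbSet G X →
      repC G M O ∈ M.K ∧ M.ρ (repC G M O) = M.ρ X ∧ (repC G M O).card = X.card ∧
      (repC G M O).image (Quotient.mk (MulAction.orbitRel G S))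
        = X.image (Quotient.mk (MulAction.orbitRel G S)) ∧ O = orbSet G (repC G M O) := by
    intro O X hX hO
    obtain ⟨hrK, hrO⟩ := repC_spec (M := M) (O := O) ⟨X, hX, hO⟩
    have hXmem : X ∈ orbSet G (repC G M O) := by
      rw [← hrO, hO]; exact mem_orbSet_self X
    obtain ⟨g, hg⟩ := hXmem
    refine ⟨hrK, ?_, ?_, ?_, hrO⟩
    · rw [hg, hρinv g _ hrK]
    · rw [hg, hcard g]
    · rw [hg, himg g]
  have key : ∀ p : Finset S → Prop,
      (∀ O : Set (Finset S), ∀ X : Finset S, X ∈ M.K → O = orbSet G X →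
        (p X ↔ p (repC G M O))) →
      numOrbits G M p = (hfin.toFinset.filter (fun O => p (repC G M O))).card := by
    intro p hp
    rw [numOrbits, ← Set.ncard_coe_finset]
    congr 1
    ext O
    simp only [Set.mem_setOf_eq, Finset.coe_filter, Set.Finite.mem_toFinset]
    constructor
    · rintro ⟨X, hX, hpX, hO⟩
      exact ⟨⟨X, hX, hO⟩, (hp O X hX hO).1 hpX⟩
    · rintro ⟨⟨X, hX, hO⟩, hpO⟩
      obtain ⟨hrK, _, _, _, hrO⟩ := hrepP O X hX hO
      exact ⟨repC G M O, hrK, hpO, hrO⟩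
  have e1 : ∀ i : ℕ, numOrbits G M (fun X => M.ρ X = X.card ∧ X.card = i)
      = (hfin.toFinset.filter (fun O =>
          M.ρ (repC G M O) = (repC G M O).card ∧ (repC G M O).card = i)).card := by
    intro i
    rw [key _ (fun O X hX hO => by
      obtain ⟨_, h1, h2, _, _⟩ := hrepP O X hX hO
      rw [h1, h2])]
    congr
  have e2 : ∀ A : Finset (Quotient (MulAction.orbitRel G S)),
      numOrbits G M (fun X => X.image (Quotient.mk (MulAction.orbitRel G S)) = A)
      = (hfin.toFinset.filter (fun O =>
          (repC G M O).image (Quotient.mk (MulAction.orbitRel G S)) = A)).card := by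
    intro A
    rw [key _ (fun O X hX hO => by
      obtain ⟨_, _, _, h3, _⟩ := hrepP O X hX hO
      rw [h3])]
    congr
  have hTrep : ∀ O ∈ hfin.toFinset, repC G M O ∈ M.K := by
    intro O hO
    rw [Set.Finite.mem_toFinset] at hO
    obtain ⟨X, hX, hOX⟩ := hO
    exact (hrepP O X hX hOX).1
  simp only [e1, e2]
  congr 1
  have hmaps : ∀ O ∈ hfin.toFinset.filter
      (fun O => M.ρ (repC G M O) = (repC G M O).card),
      (repC G M O).card ∈ Finset.range (d + 1) := by
    intro O hO
    obtain ⟨hOT, hrc⟩ := Finset.mem_filter.1 hO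
    rw [Finset.mem_range, ← hrc]
    exact Nat.lt_succ_of_le (hd _ (hTrep O hOT))
  have hL : ∑ i ∈ Finset.range (d + 1),
      ((hfin.toFinset.filter (fun O =>
        M.ρ (repC G M O) = (repC G M O).card ∧ (repC G M O).card = i)).card : ℚ)
        * ((1 - t) / t) ^ (d - i)
      = ∑ O ∈ hfin.toFinset.filter (fun O => M.ρ (repC G M O) = (repC G M O).card),
          ((1 - t) / t) ^ (d - (repC G M O).card) := by
    rw [← Finset.sum_fiberwise_of_maps_to hmaps
      (fun O => ((1 - t) / t) ^ (d - (repC G M O).card))]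
    apply Finset.sum_congr rfl
    intro i _
    rw [Finset.filter_filter]
    have hc : ∀ O ∈ hfin.toFinset.filter (fun O =>
        M.ρ (repC G M O) = (repC G M O).card ∧ (repC G M O).card = i),
        ((1 - t) / t) ^ (d - (repC G M O).card) = ((1 - t) / t) ^ (d - i) :=
      fun O hO => by rw [(Finset.mem_filter.1 hO).2.2]
    rw [Finset.sum_congr rfl hc, Finset.sum_const, nsmul_eq_mul]
  have hR : ∑ A : Finset (Quotient (MulAction.orbitRel G S)),
      ((hfin.toFinset.filter (fun O =>
        (repC G M O).image (Quotient.mk (MulAction.orbitRel G S)) = A)).card : ℚ)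
        * (1 / t - 1) ^ (d - ρ' A) * ((1 : ℚ) - 1) ^ (A.card - ρ' A)
      = ∑ O ∈ hfin.toFinset,
          ((1 - t) / t) ^ (d - M.ρ (repC G M O))
            * (0 : ℚ) ^ ((repC G M O).card - M.ρ (repC G M O)) := by
    rw [← Finset.sum_fiberwise hfin.toFinset
      (fun O => (repC G M O).image (Quotient.mk (MulAction.orbitRel G S)))
      (fun O => ((1 - t) / t) ^ (d - M.ρ (repC G M O))
        * (0 : ℚ) ^ ((repC G M O).card - M.ρ (repC G M O)))]
    apply Finset.sum_congr rfl
    intro A _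
    have hc : ∀ O ∈ hfin.toFinset.filter (fun O =>
        (repC G M O).image (Quotient.mk (MulAction.orbitRel G S)) = A),
        ((1 - t) / t) ^ (d - M.ρ (repC G M O))
          * (0 : ℚ) ^ ((repC G M O).card - M.ρ (repC G M O))
        = (1 / t - 1) ^ (d - ρ' A) * ((1 : ℚ) - 1) ^ (A.card - ρ' A) := by
      intro O hO
      obtain ⟨hOT, hA⟩ := Finset.mem_filter.1 hO
      have hrK := hTrep O hOT
      have hρA : ρ' A = M.ρ (repC G M O) := by rw [← hA, hρ' _ hrK]
      have hcA : A.card = (repC G M O).card := by rw [← hA, hsupp _ hrK]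
      rw [hρA, hcA, h1t, sub_self]
    rw [Finset.sum_congr rfl hc, Finset.sum_const, nsmul_eq_mul, mul_assoc]
  rw [hL, hR, Finset.sum_filter]
  apply Finset.sum_congr rfl
  intro O hOT
  by_cases h : M.ρ (repC G M O) = (repC G M O).card
  · rw [if_pos h, h, Nat.sub_self, pow_zero, mul_one]
  · rw [if_neg h]
    have hle := M.rank_le_card _ (hTrep O hOT)
    have hne : (repC G M O).card - M.ρ (repC G M O) ≠ 0 := by omega
    rw [zero_pow hne, mul_zero]
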